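/- Let γ : I → X be a continuous map of locally bounded variation with speed measure ν. Then for every Borel set A ⊆ I one has H¹(γ(A)) ≤ ν(A), where H¹ denotes the one-dimensional (outer) Hausdorff measure on X. If moreover γ is injective, then H¹(γ(A)) = ν(A) for every Borel set A ⊆ I. -/

import Mathlib

open Filter Topology Set MeasureTheory ENNReal NNReal

section Aux

variable {X : Type*} [MetricSpace X] [MeasurableSpace X] [BorelSpace X]

/-- Upper bound: the 1-dimensional Hausdorff measure of the image of any set under
any map is at most the variation on that set. -/
private lemma lemA (γ : ℝ → X) (J : Set ℝ) : μH[1] (γ '' J) ≤ eVariationOn γ J := by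
  rcases eq_top_or_lt_top (eVariationOn γ J) with h | h
  · exact h ▸ le_top
  rcases J.eq_empty_or_nonempty with rfl | ⟨x₀, hx₀⟩
  · simp
  have hbv : BoundedVariationOn γ J := h.ne
  have hlbv : LocallyBoundedVariationOn γ J := hbv.locallyBoundedVariationOn
  classical
  set vf : ℝ → ℝ := fun t => variationOnFromTo γ J x₀ t with hvf
  have key2 : ∀ x ∈ J, ∀ y ∈ J, x ≤ y →
      eVariationOn γ (J ∩ Icc x y) = edist (vf x) (vf y) := by
    intro x hx y hy hxy
    have hadd := variationOnFromTo.add hlbv hx₀ hx hy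
    have h2 : variationOnFromTo γ J x y = vf y - vf x := by
      simp only [hvf]; linarith
    rw [variationOnFromTo.eq_of_le γ J hxy] at h2
    have hne : eVariationOn γ (J ∩ Icc x y) ≠ ⊤ :=
      ((eVariationOn.mono γ inter_subset_left).trans_lt h).ne
    have hmono : vf x ≤ vf y :=
      variationOnFromTo.monotoneOn hlbv hx₀ hx hy hxy
    rw [edist_dist, Real.dist_eq, abs_sub_comm, abs_of_nonneg (sub_nonneg.2 hmono), ← h2,
      ENNReal.ofReal_toReal hne]
  have hγs : ∀ x ∈ J, ∀ y ∈ J, edist (γ x) (γ y) ≤ edist (vf x) (vf y) := by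
    intro x hx y hy
    rcases le_total x y with hxy | hyx
    · rw [← key2 x hx y hy hxy]
      exact eVariationOn.edist_le γ ⟨hx, le_refl x, hxy⟩ ⟨hy, hxy, le_refl y⟩
    · rw [edist_comm (γ x), edist_comm (vf x), ← key2 y hy x hx hyx]
      exact eVariationOn.edist_le γ ⟨hy, le_refl y, hyx⟩ ⟨hx, hyx, le_refl x⟩
  have hsV : ∀ x ∈ J, ∀ y ∈ J, edist (vf x) (vf y) ≤ eVariationOn γ J := by
    intro x hx y hy
    rcases le_total x y with hxy | hyx
    · rw [← key2 x hx y hy hxy]; exact eVariationOn.mono γ inter_subset_left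
    · rw [edist_comm, ← key2 y hy x hx hyx]; exact eVariationOn.mono γ inter_subset_left
  set f : ℝ → X := fun r => if hr : ∃ t, t ∈ J ∧ vf t = r then γ hr.choose else γ x₀ with hf
  have hfs : ∀ t ∈ J, f (vf t) = γ t := by
    intro t ht
    have hr : ∃ t', t' ∈ J ∧ vf t' = vf t := ⟨t, ht, rfl⟩
    have h1 := hr.choose_spec
    have h3 : edist (γ hr.choose) (γ t) ≤ edist (vf hr.choose) (vf t) := hγs _ h1.1 t ht
    rw [h1.2] at h3
    simp only [edist_self] at h3
    have h4 : γ hr.choose = γ t := edist_le_zero.mp h3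
    simp only [hf, dif_pos hr, h4]
  have himg : γ '' J = f '' (vf '' J) := by
    rw [Set.image_image]
    exact (Set.image_congr fun t ht => (hfs t ht).symm)
  have hlip : LipschitzOnWith 1 f (vf '' J) := by
    rintro r1 ⟨t1, ht1, rfl⟩ r2 ⟨t2, ht2, rfl⟩
    rw [hfs t1 ht1, hfs t2 ht2]
    simpa using hγs t1 ht1 t2 ht2
  calc μH[1] (γ '' J) = μH[1] (f '' (vf '' J)) := by rw [himg]
    _ ≤ ((1:ℝ≥0) : ℝ≥0∞) ^ (1:ℝ) * μH[1] (vf '' J) := hlip.hausdorffMeasure_image_le zero_le_one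
    _ = μH[1] (vf '' J) := by simp
    _ = volume (vf '' J) := by rw [MeasureTheory.hausdorffMeasure_real]
    _ ≤ EMetric.diam (vf '' J) := Real.volume_le_diam _
    _ ≤ eVariationOn γ J := EMetric.diam_le (by
        rintro r1 ⟨t1, ht1, rfl⟩ r2 ⟨t2, ht2, rfl⟩
        exact hsV t1 ht1 t2 ht2)


/-- In a metric space, the 1-dimensional Hausdorff measure of a preconnected set is at
least the distance between any two of its points. -/
private lemma lemC1 {C : Set X} (hC : IsPreconnected C) {x y : X} (hx : x ∈ C) (hy : y ∈ C) :
    edist x y ≤ μH[1] C := by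
  have hlip : LipschitzWith 1 (dist x) := LipschitzWith.dist_right x
  have himg : Icc 0 (dist x y) ⊆ (dist x) '' C := by
    have hpre : IsPreconnected ((dist x) '' C) :=
      hC.image _ (Continuous.continuousOn (by fun_prop))
    have hoc : OrdConnected ((dist x) '' C) := hpre.ordConnected
    exact hoc.out ⟨x, hx, dist_self x⟩ ⟨y, hy, rfl⟩
  calc edist x y = ENNReal.ofReal (dist x y) := edist_dist x y
    _ = volume (Icc 0 (dist x y)) := by rw [Real.volume_Icc, sub_zero]
    _ = μH[1] (Icc 0 (dist x y)) := by rw [MeasureTheory.hausdorffMeasure_real]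
    _ ≤ μH[1] ((dist x) '' C) := measure_mono himg
    _ ≤ ((1:ℝ≥0) : ℝ≥0∞) ^ (1:ℝ) * μH[1] C := hlip.hausdorffMeasure_image_le zero_le_one C
    _ = μH[1] C := by simp

/-- Lower bound for injective continuous curves: the variation on an order-connected set
is at most the Hausdorff measure of the image. -/
private lemma lemB {I : Set ℝ} (γ : ℝ → X) (hcont : ContinuousOn γ I) (hinj : InjOn γ I)
    {J : Set ℝ} (hJI : J ⊆ I) (hJ : J.OrdConnected) :
    eVariationOn γ J ≤ μH[1] (γ '' J) := by
  haveI : NoAtoms (μH[1] : Measure X) := MeasureTheory.Measure.noAtoms_hausdorff X one_pos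
  haveI : NullSingletonClass (μH[1] : Measure X) :=
    MeasureTheory.Measure.nullSingletonClass_hausdorff X one_pos
  rw [eVariationOn]
  refine iSup_le ?_
  rintro ⟨n, ⟨u, hu, us⟩⟩
  have hIccJ : ∀ i j : ℕ, i ≤ j → Icc (u i) (u j) ⊆ J := fun i j hij =>
    hJ.out (us i) (us j)
  set E : ℕ → Set X := fun i => γ '' Icc (u i) (u (i + 1)) with hE
  have hEco : ∀ i, ContinuousOn γ (Icc (u i) (u (i + 1))) := fun i =>
    hcont.mono ((hIccJ i (i+1) (Nat.le_succ i)).trans hJI)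
  have hEmeas : ∀ i, MeasurableSet (E i) := fun i =>
    ((isCompact_Icc.image_of_continuousOn (hEco i)).isClosed).measurableSet
  have hterm : ∀ i, edist (γ (u (i + 1))) (γ (u i)) ≤ μH[1] (E i) := by
    intro i
    have hpre : IsPreconnected (E i) := isPreconnected_Icc.image γ (hEco i)
    have h1 : γ (u (i+1)) ∈ E i := ⟨u (i+1), ⟨hu (Nat.le_succ i), le_refl _⟩, rfl⟩
    have h2 : γ (u i) ∈ E i := ⟨u i, ⟨le_refl _, hu (Nat.le_succ i)⟩, rfl⟩
    exact lemC1 hpre h1 h2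
  have hdisj : (↑(Finset.range n) : Set ℕ).Pairwise (Function.onFun (AEDisjoint (μH[1] : Measure X)) E) := by
    have haux : ∀ i j : ℕ, i < j → (μH[1] : Measure X) (E i ∩ E j) = 0 := by
      intro i j hij
      have hsub1 : Icc (u i) (u (i+1)) ⊆ I := (hIccJ i (i+1) (Nat.le_succ i)).trans hJI
      have hsub2 : Icc (u j) (u (j+1)) ⊆ I := (hIccJ j (j+1) (Nat.le_succ j)).trans hJI
      have hint : E i ∩ E j = γ '' (Icc (u i) (u (i+1)) ∩ Icc (u j) (u (j+1))) :=
        (hinj.image_inter hsub1 hsub2).symm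
      have hss : (Icc (u i) (u (i+1)) ∩ Icc (u j) (u (j+1))).Subsingleton := by
        intro z hz w hw
        have h1 : z ≤ u (i+1) := hz.1.2
        have h2 : u j ≤ z := hz.2.1
        have h3 : w ≤ u (i+1) := hw.1.2
        have h4 : u j ≤ w := hw.2.1
        have h5 : u (i+1) ≤ u j := hu hij
        linarith
      rw [hint]
      exact measure_mono_null (image_mono (fun z hz => hz))
        ((hss.image γ).measure_zero _)
    intro i _ j _ hij
    rcases lt_or_gt_of_ne hij with h | h
    · exact haux i j h
    · exact MeasureTheory.AEDisjoint.symm (haux j i h)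
  calc ∑ i ∈ Finset.range n, edist (γ (u (i + 1))) (γ (u i))
      ≤ ∑ i ∈ Finset.range n, μH[1] (E i) := Finset.sum_le_sum fun i _ => hterm i
    _ = μH[1] (⋃ i ∈ Finset.range n, E i) :=
        (measure_biUnion_finset₀ hdisj fun i _ => (hEmeas i).nullMeasurableSet).symm
    _ ≤ μH[1] (γ '' J) := measure_mono (by
        refine iUnion₂_subset fun i _ => ?_
        exact image_mono (hIccJ i (i+1) (Nat.le_succ i)))


end Aux

/-- `ν` is the speed measure of `γ` on the interval `I`. -/
def IsSpeedMeasure {X : Type*} [MetricSpace X] (γ : ℝ → X) (I : Set ℝ)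
    (ν : Measure ℝ) : Prop :=
  ν Iᶜ = 0 ∧
  ∀ J : Set ℝ, J ⊆ I → J.OrdConnected → (∃ U : Set ℝ, IsOpen U ∧ J = U ∩ I) →
    ν J = eVariationOn γ J

section Aux2

variable {X : Type*} [MetricSpace X] [MeasurableSpace X] [BorelSpace X]

private lemma part1_core {I : Set ℝ} (hI : I.OrdConnected) (γ : ℝ → X)
    (hγ : ∀ a ∈ I, ∀ b ∈ I, a ≤ b → eVariationOn γ (Set.Icc a b) < ⊤)
    (ν : Measure ℝ) (hν : IsSpeedMeasure γ I ν)
    {p q : ℝ} (hp : p ∈ I) (hq : q ∈ I)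
    (A : Set ℝ) (hA : A ⊆ Ioo p q) : μH[1] (γ '' A) ≤ ν A := by
  rcases le_or_gt p q with hpq | hpq
  · have hIoo : Ioo p q ⊆ I := fun z hz => hI.out hp hq ⟨hz.1.le, hz.2.le⟩
    have hval : ∀ J : Set ℝ, IsOpen J → J.OrdConnected → J ⊆ Ioo p q →
        ν J = eVariationOn γ J := fun J hJo hJc hJsub =>
      hν.2 J (hJsub.trans hIoo) hJc ⟨J, hJo, (inter_eq_left.mpr (hJsub.trans hIoo)).symm⟩
    have hfin : ν (Ioo p q) < ⊤ := by
      rw [hval (Ioo p q) isOpen_Ioo ordConnected_Ioo subset_rfl]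
      exact (eVariationOn.mono γ Ioo_subset_Icc_self).trans_lt (hγ p hp q hq hpq)
    set ν' : Measure ℝ := ν.restrict (Ioo p q) with hν'
    haveI : IsFiniteMeasure ν' := ⟨by
      rw [Measure.restrict_apply_univ]; exact hfin⟩
    refine ENNReal.le_of_forall_pos_le_add fun ε hε _ => ?_
    have hν'A : ν' A ≠ ⊤ := ((measure_mono (subset_univ A)).trans_lt
      (measure_lt_top ν' univ)).ne
    have hlt : ν' A < ν' A + ε := ENNReal.lt_add_right hν'A
      (by exact_mod_cast hε.ne')
    obtain ⟨U, hAU, hUo, hUlt⟩ := Set.exists_isOpen_lt_of_lt A (ν' A + ε) hlt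
    set V : Set ℝ := U ∩ Ioo p q with hVdef
    have hVo : IsOpen V := hUo.inter isOpen_Ioo
    have hAV : A ⊆ V := fun z hz => ⟨hAU hz, hA hz⟩
    set 𝒞 : Set (Set ℝ) := (connectedComponentIn V) '' V with h𝒞
    have hC_open : ∀ C ∈ 𝒞, IsOpen C := by
      rintro C ⟨z, hz, rfl⟩; exact hVo.connectedComponentIn
    have hC_ne : ∀ C ∈ 𝒞, C.Nonempty := by
      rintro C ⟨z, hz, rfl⟩; exact ⟨z, mem_connectedComponentIn hz⟩
    have hC_sub : ∀ C ∈ 𝒞, C ⊆ V := by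
      rintro C ⟨z, hz, rfl⟩; exact connectedComponentIn_subset V z
    have hC_ord : ∀ C ∈ 𝒞, C.OrdConnected := by
      rintro C ⟨z, hz, rfl⟩; exact isPreconnected_connectedComponentIn.ordConnected
    have hpd : 𝒞.PairwiseDisjoint id := by
      rintro C₁ ⟨z₁, hz₁, rfl⟩ C₂ ⟨z₂, hz₂, rfl⟩ hne
      rw [Function.onFun, disjoint_left]
      intro w hw1 hw2
      exact hne ((connectedComponentIn_eq hw1).trans (connectedComponentIn_eq hw2).symm)
    have hcnt : 𝒞.Countable :=
      hpd.countable_of_isOpen (fun C hC => hC_open C hC) (fun C hC => hC_ne C hC)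
    have hcover : ⋃₀ 𝒞 = V := by
      apply subset_antisymm (sUnion_subset fun C hC => hC_sub C hC)
      intro z hz
      exact ⟨connectedComponentIn V z, ⟨z, hz, rfl⟩, mem_connectedComponentIn hz⟩
    have hres : ∀ W : Set ℝ, W ⊆ Ioo p q → ν' W = ν W := by
      intro W hW
      rw [hν', Measure.restrict_apply' measurableSet_Ioo, inter_eq_left.mpr hW]
    calc μH[1] (γ '' A) ≤ μH[1] (γ '' ⋃₀ 𝒞) := by
          rw [hcover]; exact measure_mono (image_mono hAV)
      _ = μH[1] (⋃ C ∈ 𝒞, γ '' C) := by rw [sUnion_eq_biUnion, image_iUnion₂]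
      _ ≤ ∑' C : 𝒞, μH[1] (γ '' (C : Set ℝ)) := measure_biUnion_le _ hcnt _
      _ ≤ ∑' C : 𝒞, ν (C : Set ℝ) := ENNReal.tsum_le_tsum (fun C => by
          refine (lemA γ (C : Set ℝ)).trans_eq ?_
          exact (hval (C : Set ℝ) (hC_open C C.2) (hC_ord C C.2)
            ((hC_sub C C.2).trans inter_subset_right)).symm)
      _ = ν (⋃₀ 𝒞) := (measure_sUnion hcnt hpd
          (fun C hC => (hC_open C hC).measurableSet)).symm
      _ = ν' V := by
          rw [hcover, hres V inter_subset_right]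
      _ ≤ ν' U := measure_mono inter_subset_left
      _ ≤ ν' A + ε := hUlt.le
      _ ≤ ν A + ε := by
          gcongr
          exact Measure.restrict_le_self
  · have : A = ∅ := subset_empty_iff.mp (by rwa [Ioo_eq_empty (not_lt.mpr hpq.le)] at hA)
    simp [this]

private lemma exhaustion {I : Set ℝ} {x₀ : ℝ} (hx₀ : x₀ ∈ I) :
    ∃ u v : ℕ → ℝ, (∀ n, u n ∈ I) ∧ (∀ n, v n ∈ I) ∧ (∀ n, u n ≤ v n) ∧
      (∀ m n, m ≤ n → Icc (u m) (v m) ⊆ Icc (u n) (v n)) ∧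
      (∀ x ∈ I, ∃ n, x ∈ Icc (u n) (v n)) := by
  obtain ⟨s, hsc, hsd⟩ := TopologicalSpace.exists_countable_dense I
  set D : Set ℝ := Subtype.val '' s with hD
  have hDI : D ⊆ I := by rintro d ⟨⟨d', hd'⟩, _, rfl⟩; exact hd'
  have hDc : D.Countable := hsc.image _
  set low : Set ℝ := {x | x ∈ I ∧ ∀ y ∈ I, x ≤ y} with hlow
  set high : Set ℝ := {x | x ∈ I ∧ ∀ y ∈ I, y ≤ x} with hhigh
  have hlowc : low.Countable := (Set.Subsingleton.countable
    (fun a ha b hb => le_antisymm (ha.2 b hb.1) (hb.2 a ha.1)))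
  have hhighc : high.Countable := (Set.Subsingleton.countable
    (fun a ha b hb => le_antisymm (hb.2 a ha.1) (ha.2 b hb.1)))
  set E : Set ℝ := insert x₀ (D ∪ low ∪ high) with hE
  have hEc : E.Countable := (hDc.union hlowc).union hhighc |>.insert x₀
  have hEI : E ⊆ I := by
    rintro e (rfl | ((he | he) | he))
    exacts [hx₀, hDI he, he.1, he.1]
  have hEne : E.Nonempty := ⟨x₀, mem_insert _ _⟩
  have hbelow : ∀ x ∈ I, ∃ e ∈ E, e ≤ x := by
    intro x hx
    by_cases h : ∃ y ∈ I, y < x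
    · obtain ⟨y, hyI, hyx⟩ := h
      have hyc : (⟨y, hyI⟩ : I) ∈ closure s := hsd _
      rw [Metric.mem_closure_iff] at hyc
      obtain ⟨b, hb, hdist⟩ := hyc (x - y) (by linarith)
      refine ⟨(b : ℝ), mem_insert_of_mem _ (Or.inl (Or.inl ⟨b, hb, rfl⟩)), ?_⟩
      have : dist (y : ℝ) (b : ℝ) < x - y := hdist
      rw [Real.dist_eq, abs_lt] at this
      linarith
    · push_neg at h
      exact ⟨x, mem_insert_of_mem _ (Or.inl (Or.inr ⟨hx, fun y hy => h y hy⟩)), le_refl x⟩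
  have habove : ∀ x ∈ I, ∃ e ∈ E, x ≤ e := by
    intro x hx
    by_cases h : ∃ y ∈ I, x < y
    · obtain ⟨y, hyI, hyx⟩ := h
      have hyc : (⟨y, hyI⟩ : I) ∈ closure s := hsd _
      rw [Metric.mem_closure_iff] at hyc
      obtain ⟨b, hb, hdist⟩ := hyc (y - x) (by linarith)
      refine ⟨(b : ℝ), mem_insert_of_mem _ (Or.inl (Or.inl ⟨b, hb, rfl⟩)), ?_⟩
      have : dist (y : ℝ) (b : ℝ) < y - x := hdist
      rw [Real.dist_eq, abs_lt] at this
      linarith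
    · push_neg at h
      exact ⟨x, mem_insert_of_mem _ (Or.inr ⟨hx, fun y hy => h y hy⟩), le_refl x⟩
  obtain ⟨e, he⟩ := hEc.exists_eq_range hEne
  have hmem : ∀ i, e i ∈ E := fun i => he ▸ mem_range_self i
  have hnonempty : ∀ n : ℕ, ((Finset.range (n+1)).image e).Nonempty :=
    fun n => (Finset.nonempty_range_iff.mpr (Nat.succ_ne_zero n)).image e
  set u : ℕ → ℝ := fun n => ((Finset.range (n+1)).image e).min' (hnonempty n) with hu
  set v : ℕ → ℝ := fun n => ((Finset.range (n+1)).image e).max' (hnonempty n) with hv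
  have huE : ∀ n, u n ∈ E := by
    intro n
    obtain ⟨i, _, hi⟩ := Finset.mem_image.mp (Finset.min'_mem _ (hnonempty n))
    have := hmem i; rwa [hi] at this
  have hvE : ∀ n, v n ∈ E := by
    intro n
    obtain ⟨i, _, hi⟩ := Finset.mem_image.mp (Finset.max'_mem _ (hnonempty n))
    have := hmem i; rwa [hi] at this
  have huv : ∀ n, u n ≤ v n := by
    intro n
    have h0 : e 0 ∈ (Finset.range (n+1)).image e :=
      Finset.mem_image_of_mem e (Finset.mem_range.mpr (Nat.succ_pos n))
    exact (Finset.min'_le _ _ h0).trans (Finset.le_max' _ _ h0)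
  have hsubset : ∀ m n : ℕ, m ≤ n →
      (Finset.range (m+1)).image e ⊆ (Finset.range (n+1)).image e :=
    fun m n hmn => Finset.image_subset_image (Finset.range_subset_range.mpr (by omega))
  refine ⟨u, v, fun n => hEI (huE n), fun n => hEI (hvE n), huv, ?_, ?_⟩
  · intro m n hmn
    apply Icc_subset_Icc
    · exact Finset.min'_subset _ (hsubset m n hmn)
    · exact Finset.max'_subset _ (hsubset m n hmn)
  · intro x hx
    obtain ⟨a, haE, hax⟩ := hbelow x hx
    obtain ⟨b, hbE, hxb⟩ := habove x hx
    rw [he] at haE hbE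
    obtain ⟨i, rfl⟩ := haE
    obtain ⟨j, rfl⟩ := hbE
    refine ⟨max i j, ?_, ?_⟩
    · exact le_trans (Finset.min'_le _ _ (Finset.mem_image_of_mem e
        (Finset.mem_range.mpr (by omega)))) hax
    · exact le_trans hxb (Finset.le_max' _ _ (Finset.mem_image_of_mem e
        (Finset.mem_range.mpr (by omega))))


private lemma himg_singleton (γ : ℝ → X) (z : ℝ) : μH[1] (γ '' ({z} : Set ℝ)) = 0 :=
  le_antisymm ((lemA γ _).trans_eq
    (eVariationOn.subsingleton γ subsingleton_singleton)) zero_le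

private lemma part1 {I : Set ℝ} (hI : I.OrdConnected) (γ : ℝ → X)
    (hγ : ∀ a ∈ I, ∀ b ∈ I, a ≤ b → eVariationOn γ (Set.Icc a b) < ⊤)
    (ν : Measure ℝ) (hν : IsSpeedMeasure γ I ν) :
    ∀ A : Set ℝ, A ⊆ I → μH[1] (γ '' A) ≤ ν A := by
  intro A hAI
  rcases I.eq_empty_or_nonempty with rfl | ⟨x₀, hx₀⟩
  · have : A = ∅ := subset_empty_iff.mp hAI
    simp [this]
  obtain ⟨u, v, huI, hvI, huv, hmono, hcov⟩ := exhaustion hx₀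
  set B : ℕ → Set ℝ := fun n => A ∩ Icc (u n) (v n) with hB
  have hBmono : Monotone B := fun m n hmn => inter_subset_inter_right A (hmono m n hmn)
  have hUB : (⋃ n, B n) = A := by
    apply subset_antisymm (iUnion_subset fun n => inter_subset_left)
    intro x hx
    obtain ⟨n, hn⟩ := hcov x (hAI hx)
    exact mem_iUnion.mpr ⟨n, hx, hn⟩
  have hBU : (⋃ n, γ '' B n) = γ '' A := by rw [← image_iUnion, hUB]
  have hper : ∀ n, μH[1] (γ '' B n) ≤ ν A := by
    intro n
    have hsplit : B n ⊆ (B n ∩ Ioo (u n) (v n)) ∪ (({u n} : Set ℝ) ∪ ({v n} : Set ℝ)) := by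
      intro z hz
      rcases eq_or_lt_of_le hz.2.1 with h1 | h1
      · exact Or.inr (Or.inl (by simp [← h1]))
      rcases eq_or_lt_of_le hz.2.2 with h2 | h2
      · exact Or.inr (Or.inr (by simp [h2]))
      · exact Or.inl ⟨hz, h1, h2⟩
    calc μH[1] (γ '' B n)
        ≤ μH[1] ((γ '' (B n ∩ Ioo (u n) (v n))) ∪ ((γ '' {u n}) ∪ (γ '' {v n}))) := by
          refine measure_mono ?_
          have := image_mono (f := γ) hsplit
          rwa [image_union, image_union] at this
      _ ≤ μH[1] (γ '' (B n ∩ Ioo (u n) (v n)))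
            + (μH[1] (γ '' ({u n} : Set ℝ)) + μH[1] (γ '' ({v n} : Set ℝ))) :=
          (measure_union_le _ _).trans (by gcongr; exact measure_union_le _ _)
      _ = μH[1] (γ '' (B n ∩ Ioo (u n) (v n))) := by
          rw [himg_singleton, himg_singleton, add_zero, add_zero]
      _ ≤ ν (B n ∩ Ioo (u n) (v n)) :=
          part1_core hI γ hγ ν hν (huI n) (hvI n) _ inter_subset_right
      _ ≤ ν A := measure_mono (inter_subset_left.trans inter_subset_left)
  calc μH[1] (γ '' A) = ⨆ n, μH[1] (γ '' B n) := by
        rw [← hBU]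
        exact Monotone.measure_iUnion (fun m n h => image_mono (hBmono h))
    _ ≤ ν A := iSup_le hper

private lemma intval {I : Set ℝ} (γ : ℝ → X) (hcont : ContinuousOn γ I) (hinj : InjOn γ I)
    {J : Set ℝ} (hJI : J ⊆ I) (hJ : J.OrdConnected) :
    μH[1] (γ '' J) = eVariationOn γ J :=
  le_antisymm (lemA γ J) (lemB γ hcont hinj hJI hJ)

private lemma atom_zero {I : Set ℝ} (hI : I.OrdConnected) (γ : ℝ → X)
    (hcont : ContinuousOn γ I) (hinj : InjOn γ I)
    (hγ : ∀ a ∈ I, ∀ b ∈ I, a ≤ b → eVariationOn γ (Set.Icc a b) < ⊤)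
    (ν : Measure ℝ) (hν : IsSpeedMeasure γ I ν) {x : ℝ} (hx : x ∈ I) : ν {x} = 0 := by
  obtain ⟨l, c', hc'I, hlx, hc'le, hlowb⟩ : ∃ l c', c' ∈ I ∧ l < x ∧ c' ≤ x ∧
      ∀ z ∈ I, l < z → c' ≤ z := by
    by_cases hc : ∃ c ∈ I, c < x
    · obtain ⟨c, hcI, hcx⟩ := hc
      exact ⟨c, c, hcI, hcx, hcx.le, fun z _ hlz => hlz.le⟩
    · push_neg at hc
      exact ⟨x - 1, x, hx, by linarith, le_refl x, fun z hz _ => hc z hz⟩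
  obtain ⟨r, d', hd'I, hxr, hd'ge, hhighb⟩ : ∃ r d', d' ∈ I ∧ x < r ∧ x ≤ d' ∧
      ∀ z ∈ I, z < r → z ≤ d' := by
    by_cases hd : ∃ d ∈ I, x < d
    · obtain ⟨d, hdI, hxd⟩ := hd
      exact ⟨d, d, hdI, hxd, hxd.le, fun z _ hzr => hzr.le⟩
    · push_neg at hd
      exact ⟨x + 1, x, hx, by linarith, le_refl x, fun z hz _ => hd z hz⟩
  set K : Set ℝ := I ∩ Ioo l r with hK
  have hKI : K ⊆ I := inter_subset_left
  have hxK : x ∈ K := ⟨hx, hlx, hxr⟩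
  have hKfin : eVariationOn γ K < ⊤ := by
    refine (eVariationOn.mono γ ?_).trans_lt (hγ c' hc'I d' hd'I (hc'le.trans hd'ge))
    exact fun z hz => ⟨hlowb z hz.1 hz.2.1, hhighb z hz.1 hz.2.2⟩
  set J : ℕ → Set ℝ := fun n => K ∩ Ioo (x - 1/(n+1)) (x + 1/(n+1)) with hJ
  have hJI : ∀ n, J n ⊆ I := fun n => inter_subset_left.trans hKI
  have hJord : ∀ n, (J n).OrdConnected := fun n =>
    (hI.inter Set.ordConnected_Ioo).inter Set.ordConnected_Ioo
  have hJrel : ∀ n, ν (J n) = eVariationOn γ (J n) := by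
    intro n
    refine hν.2 (J n) (hJI n) (hJord n) ⟨Ioo l r ∩ Ioo (x - 1/(n+1)) (x + 1/(n+1)),
      isOpen_Ioo.inter isOpen_Ioo, ?_⟩
    simp only [hJ, hK]
    ext z
    constructor
    · rintro ⟨⟨h1, h2⟩, h3⟩; exact ⟨⟨h2, h3⟩, h1⟩
    · rintro ⟨⟨h1, h2⟩, h3⟩; exact ⟨⟨h3, h1⟩, h2⟩
  have hpos : ∀ n : ℕ, (0:ℝ) < 1/(n+1) := fun n => by positivity
  have hxJ : ∀ n, x ∈ J n := fun n => ⟨hxK, by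
    constructor
    · linarith [hpos n]
    · linarith [hpos n]⟩
  have hmeasJ : ∀ n, MeasurableSet (J n) :=
    fun n => (hI.measurableSet.inter measurableSet_Ioo).inter measurableSet_Ioo
  have himgmeas : ∀ n, MeasurableSet (γ '' J n) := fun n =>
    (hmeasJ n).image_of_continuousOn_injOn (hcont.mono (hJI n)) (hinj.mono (hJI n))
  have hJanti : Antitone J := by
    intro m n hmn
    have hle : (1:ℝ)/(n+1) ≤ 1/(m+1) := by
      apply one_div_le_one_div_of_le (by positivity)
      have := (Nat.cast_le (α := ℝ)).mpr hmn
      linarith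
    exact inter_subset_inter_right K (Ioo_subset_Ioo (by linarith) (by linarith))
  have hanti : Antitone fun n => γ '' J n := fun m n hmn => image_mono (hJanti hmn)
  have hvalJ : ∀ n, μH[1] (γ '' J n) = eVariationOn γ (J n) := fun n =>
    intval γ hcont hinj (hJI n) (hJord n)
  have hfin0 : μH[1] (γ '' J 0) ≠ ⊤ := by
    rw [hvalJ 0]
    exact ((eVariationOn.mono γ inter_subset_left).trans_lt hKfin).ne
  have hInter : (⋂ n, J n) = {x} := by
    apply subset_antisymm
    · intro z hz
      simp only [mem_iInter] at hz
      by_contra hne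
      obtain ⟨n, hn⟩ := exists_nat_one_div_lt (abs_pos.mpr (sub_ne_zero.mpr hne))
      have h1 := (hz n).2
      rw [mem_Ioo] at h1
      have : |z - x| < 1/(n+1) := abs_lt.mpr ⟨by linarith [h1.1], by linarith [h1.2]⟩
      linarith
    · intro z hz
      rw [mem_singleton_iff] at hz
      subst hz
      exact mem_iInter.mpr hxJ
  have himgInter : (⋂ n, γ '' J n) = γ '' ({x} : Set ℝ) := by
    rw [← hInter]
    exact (InjOn.image_iInter_eq (hinj.mono (iUnion_subset hJI))).symm
  refine le_antisymm ?_ zero_le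
  have h1 : ν {x} ≤ ⨅ n, μH[1] (γ '' J n) := le_iInf fun n => by
    rw [hvalJ n, ← hJrel n]
    exact measure_mono (singleton_subset_iff.mpr (hxJ n))
  refine h1.trans ?_
  rw [← Antitone.measure_iInter hanti (fun n => (himgmeas n).nullMeasurableSet) ⟨0, hfin0⟩,
    himgInter, himg_singleton]

private lemma sandwich {I : Set ℝ} (hI : I.OrdConnected) (γ : ℝ → X)
    (hcont : ContinuousOn γ I) (hinj : InjOn γ I)
    (hγ : ∀ a ∈ I, ∀ b ∈ I, a ≤ b → eVariationOn γ (Set.Icc a b) < ⊤)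
    (ν : Measure ℝ) (hν : IsSpeedMeasure γ I ν) {p q : ℝ} (hp : p ∈ I) (hq : q ∈ I)
    {J W : Set ℝ} (hWJ : W ⊆ J) (hJW : J \ W ⊆ {p, q}) (hWo : IsOpen W)
    (hWord : W.OrdConnected) (hJord : J.OrdConnected) (hJI : J ⊆ I) :
    μH[1] (γ '' J) = ν J ∧ μH[1] (γ '' J) = eVariationOn γ W := by
  have hWI : W ⊆ I := hWJ.trans hJI
  have hνW : ν W = eVariationOn γ W := hν.2 W hWI hWord ⟨W, hWo, (inter_eq_left.mpr hWI).symm⟩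
  have hp0 : ν {p} = 0 := atom_zero hI γ hcont hinj hγ ν hν hp
  have hq0 : ν {q} = 0 := atom_zero hI γ hcont hinj hγ ν hν hq
  have hsub : J ⊆ W ∪ (({p} : Set ℝ) ∪ ({q} : Set ℝ)) := by
    intro z hz
    by_cases h : z ∈ W
    · exact Or.inl h
    · rcases hJW ⟨hz, h⟩ with h' | h'
      · exact Or.inr (Or.inl h')
      · exact Or.inr (Or.inr h')
  have hνJ : ν J = eVariationOn γ W := by
    apply le_antisymm
    · calc ν J ≤ ν (W ∪ (({p} : Set ℝ) ∪ ({q} : Set ℝ))) := measure_mono hsub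
        _ ≤ ν W + (ν {p} + ν {q}) :=
          (measure_union_le _ _).trans (by gcongr; exact measure_union_le _ _)
        _ = eVariationOn γ W := by rw [hp0, hq0, hνW, add_zero, add_zero]
    · rw [← hνW]; exact measure_mono hWJ
  have hμJ : μH[1] (γ '' J) = eVariationOn γ W := by
    apply le_antisymm
    · calc μH[1] (γ '' J) ≤ μH[1] ((γ '' W) ∪ ((γ '' {p}) ∪ (γ '' {q}))) := by
            refine measure_mono ?_
            have := image_mono (f := γ) hsub
            rwa [image_union, image_union] at this
        _ ≤ μH[1] (γ '' W) + (μH[1] (γ '' ({p} : Set ℝ)) + μH[1] (γ '' ({q} : Set ℝ))) :=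
          (measure_union_le _ _).trans (by gcongr; exact measure_union_le _ _)
        _ = eVariationOn γ W := by
            rw [himg_singleton, himg_singleton, intval γ hcont hinj hWI hWord,
              add_zero, add_zero]
    · rw [← intval γ hcont hinj hWI hWord]
      exact measure_mono (image_mono hWJ)
  exact ⟨hμJ.trans hνJ.symm, hμJ⟩

private lemma pairP {I : Set ℝ} (hI : I.OrdConnected) (γ : ℝ → X)
    (hcont : ContinuousOn γ I) (hinj : InjOn γ I)
    (hγ : ∀ a ∈ I, ∀ b ∈ I, a ≤ b → eVariationOn γ (Set.Icc a b) < ⊤)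
    (ν : Measure ℝ) (hν : IsSpeedMeasure γ I ν) {p q : ℝ} (hp : p ∈ I) (hq : q ∈ I)
    (hpq : p ≤ q) :
    ∀ B : Set ℝ, MeasurableSet B → μH[1] (γ '' (B ∩ Icc p q)) = ν (B ∩ Icc p q) := by
  have hGI : Icc p q ⊆ I := hI.out hp hq
  have hfull : μH[1] (γ '' Icc p q) = ν (Icc p q) ∧
      μH[1] (γ '' Icc p q) = eVariationOn γ (Ioo p q) := by
    refine sandwich hI γ hcont hinj hγ ν hν hp hq Ioo_subset_Icc_self ?_
      isOpen_Ioo Set.ordConnected_Ioo Set.ordConnected_Icc hGI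
    rintro z ⟨hz1, hz2⟩
    rw [mem_Ioo, not_and_or, not_lt, not_lt] at hz2
    rcases hz2 with h | h
    · exact Or.inl (le_antisymm h hz1.1)
    · exact Or.inr (le_antisymm hz1.2 h)
  have hνG_ne : ν (Icc p q) ≠ ⊤ := by
    rw [← hfull.1, hfull.2]
    exact ((eVariationOn.mono γ Ioo_subset_Icc_self).trans_lt (hγ p hp q hq hpq)).ne
  have h0 : μH[1] (γ '' ((∅ : Set ℝ) ∩ Icc p q)) = ν ((∅ : Set ℝ) ∩ Icc p q) := by
    simp
  have hbasic : ∀ t ∈ ⋃ (a : ℚ) (b : ℚ) (_ : a < b), {Ioo (a : ℝ) (b : ℝ)},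
      μH[1] (γ '' (t ∩ Icc p q)) = ν (t ∩ Icc p q) := by
    intro t ht
    simp only [mem_iUnion, mem_singleton_iff] at ht
    obtain ⟨a, b, hab, rfl⟩ := ht
    have hdiff : ((Ioo (a:ℝ) b) ∩ Icc p q) \ ((Ioo (a:ℝ) b) ∩ Ioo p q) ⊆ {p, q} := by
      rintro z ⟨⟨hz1, hz2⟩, hz3⟩
      have hznoo : z ∉ Ioo p q := fun h => hz3 ⟨hz1, h⟩
      rw [mem_Ioo, not_and_or, not_lt, not_lt] at hznoo
      rcases hznoo with h | h
      · exact Or.inl (le_antisymm h hz2.1)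
      · exact Or.inr (le_antisymm hz2.2 h)
    exact (sandwich hI γ hcont hinj hγ ν hν hp hq
      (inter_subset_inter_right _ Ioo_subset_Icc_self) hdiff
      (isOpen_Ioo.inter isOpen_Ioo)
      (Set.ordConnected_Ioo.inter Set.ordConnected_Ioo)
      (Set.ordConnected_Ioo.inter Set.ordConnected_Icc)
      (inter_subset_right.trans hGI)).1
  have hcompl : ∀ t : Set ℝ, MeasurableSet t →
      μH[1] (γ '' (t ∩ Icc p q)) = ν (t ∩ Icc p q) →
      μH[1] (γ '' (tᶜ ∩ Icc p q)) = ν (tᶜ ∩ Icc p q) := by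
    intro t htm ht
    set A1 : Set ℝ := t ∩ Icc p q with hA1
    set A2 : Set ℝ := tᶜ ∩ Icc p q with hA2
    have hA1I : A1 ⊆ I := inter_subset_right.trans hGI
    have hA2I : A2 ⊆ I := inter_subset_right.trans hGI
    have hdis : Disjoint A1 A2 := by
      refine disjoint_left.mpr ?_
      rintro z ⟨hzt, _⟩ ⟨hzt', _⟩
      exact hzt' hzt
    have hun : A1 ∪ A2 = Icc p q := by
      ext z
      constructor
      · rintro (h | h)
        exacts [h.2, h.2]
      · intro hz
        by_cases h : z ∈ t
        exacts [Or.inl ⟨h, hz⟩, Or.inr ⟨h, hz⟩]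
    have hA2m : MeasurableSet A2 := htm.compl.inter measurableSet_Icc
    have himg2m : MeasurableSet (γ '' A2) :=
      hA2m.image_of_continuousOn_injOn (hcont.mono hA2I) (hinj.mono hA2I)
    have himgdis : Disjoint (γ '' A1) (γ '' A2) := by
      rw [disjoint_iff_inter_eq_empty, ← hinj.image_inter hA1I hA2I,
        disjoint_iff_inter_eq_empty.mp hdis, image_empty]
    have h1 : μH[1] (γ '' A1) + μH[1] (γ '' A2) = μH[1] (γ '' Icc p q) := by
      rw [← measure_union himgdis himg2m, ← image_union, hun]
    have h2 : ν A1 + ν A2 = ν (Icc p q) := by rw [← measure_union hdis hA2m, hun]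
    have hfin1 : ν A1 ≠ ⊤ :=
      ((measure_mono inter_subset_right).trans_lt (lt_top_iff_ne_top.mpr hνG_ne)).ne
    rw [ht, hfull.1, ← h2] at h1
    exact (ENNReal.add_right_inj hfin1).mp h1
  have hunion : ∀ f : ℕ → Set ℝ, Pairwise (Function.onFun Disjoint f) → (∀ i, MeasurableSet (f i)) →
      (∀ i, μH[1] (γ '' (f i ∩ Icc p q)) = ν (f i ∩ Icc p q)) →
      μH[1] (γ '' ((⋃ i, f i) ∩ Icc p q)) = ν ((⋃ i, f i) ∩ Icc p q) := by
    intro f hdisj hmeas hC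
    have key : (⋃ i, f i) ∩ Icc p q = ⋃ i, (f i ∩ Icc p q) := iUnion_inter _ f
    have hgI : ∀ i, f i ∩ Icc p q ⊆ I := fun i => inter_subset_right.trans hGI
    have hgm : ∀ i, MeasurableSet (f i ∩ Icc p q) :=
      fun i => (hmeas i).inter measurableSet_Icc
    have hgdis : Pairwise (Function.onFun Disjoint fun i => f i ∩ Icc p q) :=
      fun i j hij => ((hdisj hij).mono inter_subset_left inter_subset_left)
    have himgm : ∀ i, MeasurableSet (γ '' (f i ∩ Icc p q)) := fun i =>
      (hgm i).image_of_continuousOn_injOn (hcont.mono (hgI i)) (hinj.mono (hgI i))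
    have himgdis : Pairwise (Function.onFun Disjoint fun i => γ '' (f i ∩ Icc p q)) := by
      intro i j hij
      rw [Function.onFun, disjoint_iff_inter_eq_empty, ← hinj.image_inter (hgI i) (hgI j),
        disjoint_iff_inter_eq_empty.mp (hgdis hij), image_empty]
    rw [key, image_iUnion, measure_iUnion himgdis himgm, measure_iUnion hgdis hgm]
    exact tsum_congr hC
  intro B hB
  exact MeasurableSpace.induction_on_inter
    (C := fun B _ => μH[1] (γ '' (B ∩ Icc p q)) = ν (B ∩ Icc p q))
    (BorelSpace.measurable_eq.trans Real.borel_eq_generateFrom_Ioo_rat)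
    Real.isPiSystem_Ioo_rat h0 hbasic hcompl hunion B hB

end Aux2

/-- For a continuous map `γ` of locally bounded variation with speed
measure `ν`, one has `H¹(γ(A)) ≤ ν(A)` for every Borel `A ⊆ I`, with equality for all
such `A` if `γ` is injective on `I`. -/
theorem hausdorff_le_speed_measure {X : Type*} [MetricSpace X]
    [MeasurableSpace X] [BorelSpace X]
    (I : Set ℝ) (hI : I.OrdConnected) (γ : ℝ → X)
    (hcont : ContinuousOn γ I)
    (hγ : ∀ a ∈ I, ∀ b ∈ I, a ≤ b → eVariationOn γ (Set.Icc a b) < ⊤)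
    (ν : Measure ℝ) (hν : IsSpeedMeasure γ I ν) :
    (∀ A : Set ℝ, A ⊆ I → MeasurableSet A → μH[1] (γ '' A) ≤ ν A) ∧
    (Set.InjOn γ I →
      ∀ A : Set ℝ, A ⊆ I → MeasurableSet A → μH[1] (γ '' A) = ν A) := by
  constructor
  · intro A hAI _
    exact part1 hI γ hγ ν hν A hAI
  · intro hinj A hAI hAm
    rcases I.eq_empty_or_nonempty with rfl | ⟨x₀, hx₀⟩
    · have : A = ∅ := subset_empty_iff.mp hAI
      simp [this]
    obtain ⟨u, v, huI, hvI, huv, hmono, hcov⟩ := exhaustion hx₀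
    set B : ℕ → Set ℝ := fun n => A ∩ Icc (u n) (v n) with hB
    have hBmono : Monotone B := fun m n hmn => inter_subset_inter_right A (hmono m n hmn)
    have hUB : (⋃ n, B n) = A := by
      apply subset_antisymm (iUnion_subset fun n => inter_subset_left)
      intro x hx
      obtain ⟨n, hn⟩ := hcov x (hAI hx)
      exact mem_iUnion.mpr ⟨n, hx, hn⟩
    have hper : ∀ n, μH[1] (γ '' B n) = ν (B n) := fun n =>
      pairP hI γ hcont hinj hγ ν hν (huI n) (hvI n) (huv n) A hAm
    calc μH[1] (γ '' A) = ⨆ n, μH[1] (γ '' B n) := by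
          rw [← hUB, image_iUnion]
          exact Monotone.measure_iUnion (fun m n h => image_mono (hBmono h))
      _ = ⨆ n, ν (B n) := iSup_congr hper
      _ = ν A := by
          rw [← Monotone.measure_iUnion hBmono, hUB]
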